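/- Let A be a unital prime complex *-algebra with a nontrivial projection p₁, set p₂ = 1 − p₁ and A_ij = p_i A p_j for i, j ∈ {1,2}, let B be a complex *-algebra, and let Φ : A → B be a bijective mapping satisfying Φ(xy + yx*) = Φ(x)Φ(y) + Φ(y)Φ(x)* for all x, y ∈ A. Then for arbitrary elements a₁₂, b₁₂ ∈ A₁₂ and c₂₁, d₂₁ ∈ A₂₁: (i) Φ(a₁₂ + b₁₂) = Φ(a₁₂) + Φ(b₁₂), and (ii) Φ(c₂₁ + d₂₁) = Φ(c₂₁) + Φ(d₂₁). -/
import Mathlib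

/-- Cancel doubling in a complex module: `x + x = y + y → x = y`. -/
private lemma half_cancel {A : Type*} [AddCommGroup A] [Module ℂ A]
    {x y : A} (hxy : x + x = y + y) : x = y := by
  have h2 : (2:ℂ) • x = (2:ℂ) • y := by rw [two_smul, two_smul]; exact hxy
  have h3 : (2:ℂ)⁻¹ • ((2:ℂ) • x) = (2:ℂ)⁻¹ • ((2:ℂ) • y) := by rw [h2]
  rwa [smul_smul, smul_smul, inv_mul_cancel₀ (two_ne_zero), one_smul, one_smul] at h3

/-- Basic multiplication facts for an element of the Peirce corner `p A q`. -/
private lemma corner_facts {A : Type*} [Ring A] {p q z : A}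
    (hpp : p * p = p) (hqq : q * q = q) (hpq : p * q = 0) (hqp : q * p = 0)
    (hz : z = p * z * q) :
    p * z = z ∧ z * q = z ∧ z * p = 0 ∧ q * z = 0 := by
  clear hpq
  refine ⟨?_, ?_, ?_, ?_⟩
  · calc p * z = p * (p * z * q) := congrArg (fun t => p * t) hz
      _ = (p * p) * z * q := by noncomm_ring
      _ = p * z * q := by rw [hpp]
      _ = z := hz.symm
  · calc z * q = (p * z * q) * q := congrArg (fun t => t * q) hz
      _ = p * z * (q * q) := by noncomm_ring
      _ = p * z * q := by rw [hqq]
      _ = z := hz.symm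
  · calc z * p = (p * z * q) * p := congrArg (fun t => t * p) hz
      _ = (p * z) * (q * p) := by noncomm_ring
      _ = 0 := by rw [hqp, mul_zero]
  · calc q * z = q * (p * z * q) := congrArg (fun t => q * t) hz
      _ = (q * p) * (z * q) := by noncomm_ring
      _ = 0 := by rw [hqp, zero_mul]

/-- A bijective map satisfying `Φ(xy + yx*) = Φ(x)Φ(y) + Φ(y)Φ(x)*` sends `0` to `0`. -/
private lemma phi_zero {A B : Type*} [Ring A] [StarRing A] [Ring B] [StarRing B]
    (Φ : A → B) (hΦ : Function.Bijective Φ)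
    (h : ∀ x y : A, Φ (x * y + y * star x) = Φ x * Φ y + Φ y * star (Φ x)) :
    Φ 0 = 0 := by
  obtain ⟨x0, hx0⟩ := hΦ.2 0
  have h1 := h x0 0
  simpa [hx0] using h1

/-- Mixed off-diagonal additivity: `Φ(z₁₂ + v₂₁) = Φ(z₁₂) + Φ(v₂₁)`. -/
private lemma pair_split {A B : Type*} [Ring A] [StarRing A] [Ring B] [StarRing B]
    (Φ : A → B) (hΦ : Function.Bijective Φ)
    (h : ∀ x y : A, Φ (x * y + y * star x) = Φ x * Φ y + Φ y * star (Φ x))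
    (p q : A) (hpp : p * p = p) (hqq : q * q = q) (hpq : p * q = 0) (hqp : q * p = 0)
    (hsp : star p = p) (hsq : star q = q) (hsum : p + q = 1)
    (z v : A) (hz : z = p * z * q) (hv : v = q * v * p) :
    Φ (z + v) = Φ z + Φ v := by
  have hΦ0 : Φ 0 = 0 := phi_zero Φ hΦ h
  obtain ⟨pz, zq, zp, qz⟩ := corner_facts hpp hqq hpq hqp hz
  obtain ⟨qv, vp, vq, pv⟩ := corner_facts hqq hpp hqp hpq hv
  have hsz : star z = q * star z * p := by
    calc star z = star (p * z * q) := congrArg star hz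
      _ = star q * (star z * star p) := by rw [star_mul, star_mul]
      _ = q * star z * p := by rw [hsq, hsp, ← mul_assoc]
  have hsv : star v = p * star v * q := by
    calc star v = star (q * v * p) := congrArg star hv
      _ = star p * (star v * star q) := by rw [star_mul, star_mul]
      _ = p * star v * q := by rw [hsp, hsq, ← mul_assoc]
  obtain ⟨qsz, szp, szq, psz⟩ := corner_facts hqq hpp hqp hpq hsz
  obtain ⟨psv, svq, svp, qsv⟩ := corner_facts hpp hqq hpq hqp hsv
  obtain ⟨S, hS⟩ := hΦ.2 (Φ z + Φ v)
  have IDL : ∀ y : A, Φ (S * y + y * star S)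
      = Φ (z * y + y * star z) + Φ (v * y + y * star v) := by
    intro y
    have h1 := h S y
    rw [hS, star_add] at h1
    rw [h1, h z y, h v y]; noncomm_ring
  have IDR : ∀ y : A, Φ (y * S + S * star y)
      = Φ (y * z + z * star y) + Φ (y * v + v * star y) := by
    intro y
    have h1 := h y S
    rw [hS] at h1
    rw [h1, h y z, h y v]; noncomm_ring
  have eqA : q * S + S * q = S := by
    apply hΦ.1
    have e1 := IDR q
    rw [hsq] at e1
    rw [e1, qz, zq, zero_add, qv, vq, add_zero, hS]
  have s11 : p * S * p = 0 := by
    have c : p * (q * S + S * q) * p = p * S * p := by rw [eqA]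
    have lhs : p * (q * S + S * q) * p = 0 := by
      rw [show p * (q * S + S * q) * p = (p * q) * (S * p) + (p * S) * (q * p) from by
        noncomm_ring, hpq, hqp, zero_mul, mul_zero, add_zero]
    exact (lhs.symm.trans c).symm
  have s22 : q * S * q = 0 := by
    have c : q * (q * S + S * q) * q = q * S * q := by rw [eqA]
    have lhs : q * (q * S + S * q) * q = q * S * q + q * S * q := by
      rw [show q * (q * S + S * q) * q = (q * q) * S * q + q * S * (q * q) from by
        noncomm_ring, hqq]
    have c2 : q * S * q + q * S * q = q * S * q := lhs.symm.trans c
    exact add_left_cancel (c2.trans (add_zero _).symm)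
  have eqC : S * p + p * star S = v + star v := by
    apply hΦ.1
    have e1 := IDL p
    rw [e1, zp, psz, vp, psv, zero_add, hΦ0, zero_add]
  have s21 : q * S * p = v := by
    have c : q * (S * p + p * star S) * p = q * (v + star v) * p := by rw [eqC]
    have lhs : q * (S * p + p * star S) * p = q * S * p := by
      rw [show q * (S * p + p * star S) * p
          = q * S * (p * p) + (q * p) * (star S * p) from by
        noncomm_ring, hpp, hqp, zero_mul, add_zero]
    have rhs : q * (v + star v) * p = v := by
      rw [show q * (v + star v) * p = q * (v * p) + q * (star v * p) from by
        noncomm_ring, vp, qv, svp, mul_zero, add_zero]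
    exact lhs.symm.trans (c.trans rhs)
  have s12 : p * S * q = z := by
    have eqD : S * q + q * star S = z + star z := by
      apply hΦ.1
      have e1 := IDL q
      rw [e1, zq, qsz, vq, qsv, zero_add, hΦ0, add_zero]
    have c : p * (S * q + q * star S) * q = p * (z + star z) * q := by rw [eqD]
    have lhs : p * (S * q + q * star S) * q = p * S * q := by
      rw [show p * (S * q + q * star S) * q
          = p * S * (q * q) + (p * q) * (star S * q) from by
        noncomm_ring, hqq, hpq, zero_mul, add_zero]
    have rhs : p * (z + star z) * q = z := by
      rw [show p * (z + star z) * q = p * (z * q) + p * (star z * q) from by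
        noncomm_ring, zq, pz, szq, mul_zero, add_zero]
    exact lhs.symm.trans (c.trans rhs)
  have expand : S = p * S * p + p * S * q + q * S * p + q * S * q := by
    calc S = (p + q) * S * (p + q) := by rw [hsum, one_mul, mul_one]
      _ = p * S * p + p * S * q + q * S * p + q * S * q := by noncomm_ring
  have Sval : S = z + v := by rw [expand, s11, s22, s12, s21]; abel
  rw [Sval] at hS; exact hS

/-- Diagonal-plus-off-diagonal additivity:
`Φ(e₁₁ + (z₁₂ + v₂₁)) = Φ(e₁₁) + Φ(z₁₂ + v₂₁)`. -/
private lemma corner_split {A B : Type*} [Ring A] [Algebra ℂ A] [StarRing A]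
    [Ring B] [StarRing B]
    (Φ : A → B) (hΦ : Function.Bijective Φ)
    (h : ∀ x y : A, Φ (x * y + y * star x) = Φ x * Φ y + Φ y * star (Φ x))
    (p q : A) (hpp : p * p = p) (hqq : q * q = q) (hpq : p * q = 0) (hqp : q * p = 0)
    (hsp : star p = p) (hsq : star q = q) (hsum : p + q = 1)
    (e z v : A) (he : e = p * e * p) (hz : z = p * z * q) (hv : v = q * v * p) :
    Φ (e + (z + v)) = Φ e + Φ (z + v) := by
  have hΦ0 : Φ 0 = 0 := phi_zero Φ hΦ h
  obtain ⟨pz, zq, zp, qz⟩ := corner_facts hpp hqq hpq hqp hz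
  obtain ⟨qv, vp, vq, pv⟩ := corner_facts hqq hpp hqp hpq hv
  have pe : p * e = e := by
    calc p * e = p * (p * e * p) := congrArg (fun t => p * t) he
      _ = (p * p) * e * p := by noncomm_ring
      _ = p * e * p := by rw [hpp]
      _ = e := he.symm
  have ep : e * p = e := by
    calc e * p = (p * e * p) * p := congrArg (fun t => t * p) he
      _ = p * e * (p * p) := by noncomm_ring
      _ = p * e * p := by rw [hpp]
      _ = e := he.symm
  have qe : q * e = 0 := by
    calc q * e = q * (p * e * p) := congrArg (fun t => q * t) he
      _ = (q * p) * (e * p) := by noncomm_ring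
      _ = 0 := by rw [hqp, zero_mul]
  have eq0 : e * q = 0 := by
    calc e * q = (p * e * p) * q := congrArg (fun t => t * q) he
      _ = (p * e) * (p * q) := by noncomm_ring
      _ = 0 := by rw [hpq, mul_zero]
  obtain ⟨S, hS⟩ := hΦ.2 (Φ e + Φ (z + v))
  have IDR : ∀ y : A, Φ (y * S + S * star y)
      = Φ (y * e + e * star y) + Φ (y * (z + v) + (z + v) * star y) := by
    intro y
    have h1 := h y S
    rw [hS] at h1
    rw [h1, h y e, h y (z + v)]; noncomm_ring
  have pM : p * (z + v) = z := by rw [mul_add, pz, pv, add_zero]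
  have Mq : (z + v) * q = z := by rw [add_mul, zq, vq, add_zero]
  have qM : q * (z + v) = v := by rw [mul_add, qz, qv, zero_add]
  have Mp : (z + v) * p = v := by rw [add_mul, zp, vp, zero_add]
  have spq : star (p - q) = p - q := by rw [star_sub, hsp, hsq]
  have eq1 : (p - q) * S + S * (p - q) = e + e := by
    apply hΦ.1
    have e1 := IDR (p - q)
    rw [spq] at e1
    have a1 : (p - q) * e + e * (p - q) = e + e := by
      rw [sub_mul, mul_sub, pe, qe, ep, eq0]; abel
    have a2 : (p - q) * (z + v) + (z + v) * (p - q) = 0 := by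
      rw [sub_mul, mul_sub, pM, qM, Mp, Mq]; abel
    rw [e1, a1, a2, hΦ0, add_zero]
  have s11 : p * S * p = e := by
    have c : p * ((p - q) * S + S * (p - q)) * p = p * (e + e) * p := by rw [eq1]
    have lhs : p * ((p - q) * S + S * (p - q)) * p = p * S * p + p * S * p := by
      rw [show p * ((p - q) * S + S * (p - q)) * p
          = (p * (p - q)) * S * p + p * S * ((p - q) * p) from by noncomm_ring,
        show p * (p - q) = p from by rw [mul_sub, hpp, hpq, sub_zero],
        show (p - q) * p = p from by rw [sub_mul, hpp, hqp, sub_zero]]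
    have rhs : p * (e + e) * p = e + e := by
      rw [show p * (e + e) * p = p * (e * p) + p * (e * p) from by noncomm_ring, ep, pe]
    exact half_cancel (lhs.symm.trans (c.trans rhs))
  have s22 : q * S * q = 0 := by
    have c : q * ((p - q) * S + S * (p - q)) * q = q * (e + e) * q := by rw [eq1]
    have lhs : q * ((p - q) * S + S * (p - q)) * q = -(q * S * q + q * S * q) := by
      rw [show q * ((p - q) * S + S * (p - q)) * q
          = (q * (p - q)) * S * q + q * S * ((p - q) * q) from by noncomm_ring,
        show q * (p - q) = -q from by rw [mul_sub, hqp, hqq, zero_sub],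
        show (p - q) * q = -q from by rw [sub_mul, hpq, hqq, zero_sub]]
      noncomm_ring
    have rhs : q * (e + e) * q = 0 := by
      rw [show q * (e + e) * q = q * (e * q) + q * (e * q) from by noncomm_ring, eq0,
        mul_zero, add_zero]
    have hx : q * S * q + q * S * q = 0 := neg_eq_zero.mp (lhs.symm.trans (c.trans rhs))
    exact half_cancel (by rw [hx, add_zero])
  have eq2 : q * S + S * q = z + v := by
    apply hΦ.1
    have e1 := IDR q
    rw [hsq] at e1
    rw [e1, qe, eq0, qM, Mq, zero_add, hΦ0, zero_add, add_comm v z]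
  have s12 : p * S * q = z := by
    have c : p * (q * S + S * q) * q = p * (z + v) * q := by rw [eq2]
    have lhs : p * (q * S + S * q) * q = p * S * q := by
      rw [show p * (q * S + S * q) * q = (p * q) * S * q + p * S * (q * q) from by
        noncomm_ring, hpq, hqq, zero_mul, zero_mul, zero_add]
    have rhs : p * (z + v) * q = z := by rw [pM, zq]
    exact lhs.symm.trans (c.trans rhs)
  have s21 : q * S * p = v := by
    have c : q * (q * S + S * q) * p = q * (z + v) * p := by rw [eq2]
    have lhs : q * (q * S + S * q) * p = q * S * p := by
      rw [show q * (q * S + S * q) * p = (q * q) * S * p + (q * S) * (q * p) from by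
        noncomm_ring, hqq, hqp, mul_zero, add_zero]
    have rhs : q * (z + v) * p = v := by rw [qM, vp]
    exact lhs.symm.trans (c.trans rhs)
  have expand : S = p * S * p + p * S * q + q * S * p + q * S * q := by
    calc S = (p + q) * S * (p + q) := by rw [hsum, one_mul, mul_one]
      _ = p * S * p + p * S * q + q * S * p + q * S * q := by noncomm_ring
  have Sval : S = e + (z + v) := by rw [expand, s11, s22, s12, s21]; abel
  rw [Sval] at hS; exact hS

/-- Claim 2.6: additivity within off-diagonal Peirce corners.
Membership a ∈ A_ij = pᵢ A pⱼ is expressed as a = pᵢ * a * pⱼ. -/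
theorem stmt_18 {A B : Type*}
    [Ring A] [Algebra ℂ A] [StarRing A] [StarModule ℂ A]
    [Ring B] [Algebra ℂ B] [StarRing B] [StarModule ℂ B]
    (hAprime : ∀ a b : A, (∀ x : A, a * x * b = 0) → a = 0 ∨ b = 0)
    (p₁ p₂ : A) (hp₁0 : p₁ ≠ 0) (hp₁1 : p₁ ≠ 1) (hp₁sa : star p₁ = p₁)
    (hp₁idem : p₁ * p₁ = p₁) (hp₂ : p₂ = 1 - p₁)
    (Φ : A → B) (hΦ : Function.Bijective Φ)
    (h : ∀ x y : A, Φ (x * y + y * star x) = Φ x * Φ y + Φ y * star (Φ x))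
    (a₁₂ b₁₂ c₂₁ d₂₁ : A)
    (ha : a₁₂ = p₁ * a₁₂ * p₂) (hb : b₁₂ = p₁ * b₁₂ * p₂)
    (hc : c₂₁ = p₂ * c₂₁ * p₁) (hd : d₂₁ = p₂ * d₂₁ * p₁) :
    Φ (a₁₂ + b₁₂) = Φ a₁₂ + Φ b₁₂ ∧
    Φ (c₂₁ + d₂₁) = Φ c₂₁ + Φ d₂₁ := by
  have hqq : p₂ * p₂ = p₂ := by
    rw [hp₂, show (1 - p₁) * (1 - p₁) = 1 - p₁ - (p₁ - p₁ * p₁) from by noncomm_ring,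
      hp₁idem, sub_self, sub_zero]
  have hpq : p₁ * p₂ = 0 := by rw [hp₂, mul_sub, mul_one, hp₁idem, sub_self]
  have hqp : p₂ * p₁ = 0 := by rw [hp₂, sub_mul, one_mul, hp₁idem, sub_self]
  have hsum : p₁ + p₂ = 1 := by rw [hp₂]; abel
  have hsum' : p₂ + p₁ = 1 := by rw [add_comm]; exact hsum
  have hsq : star p₂ = p₂ := by rw [hp₂, star_sub, star_one, hp₁sa]
  have hΦ0 : Φ 0 = 0 := phi_zero Φ hΦ h
  have hpmem : p₁ = p₁ * p₁ * p₁ := by rw [hp₁idem, hp₁idem]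
  have hqmem : p₂ = p₂ * p₂ * p₂ := by rw [hqq, hqq]
  have h012 : (0 : A) = p₁ * 0 * p₂ := by simp
  have h021 : (0 : A) = p₂ * 0 * p₁ := by simp
  constructor
  · -- Part (i): additivity on A₁₂
    obtain ⟨pa, aq, ap0, qa⟩ := corner_facts hp₁idem hqq hpq hqp ha
    obtain ⟨pb, bq, bp0, qb⟩ := corner_facts hp₁idem hqq hpq hqp hb
    have hsb : star b₁₂ = p₂ * star b₁₂ * p₁ := by
      calc star b₁₂ = star (p₁ * b₁₂ * p₂) := congrArg star hb
        _ = star p₂ * (star b₁₂ * star p₁) := by rw [star_mul, star_mul]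
        _ = p₂ * star b₁₂ * p₁ := by rw [hsq, hp₁sa, ← mul_assoc]
    obtain ⟨qsb, sbp, sbq0, psb0⟩ := corner_facts hqq hp₁idem hqp hpq hsb
    have hba : b₁₂ * a₁₂ = 0 := by
      calc b₁₂ * a₁₂ = b₁₂ * (p₁ * a₁₂ * p₂) := congrArg (fun t => b₁₂ * t) ha
        _ = (b₁₂ * p₁) * (a₁₂ * p₂) := by noncomm_ring
        _ = 0 := by rw [bp0, zero_mul]
    have hz1 : a₁₂ + b₁₂ = p₁ * (a₁₂ + b₁₂) * p₂ := by
      rw [mul_add, add_mul, ← ha, ← hb]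
    have he1 : a₁₂ * star b₁₂ = p₁ * (a₁₂ * star b₁₂) * p₁ := by
      rw [show p₁ * (a₁₂ * star b₁₂) * p₁ = (p₁ * a₁₂) * (star b₁₂ * p₁) from by
        noncomm_ring, pa, sbp]
    have split_x : Φ (p₁ + b₁₂) = Φ p₁ + Φ b₁₂ := by
      have hcs := corner_split Φ hΦ h p₁ p₂ hp₁idem hqq hpq hqp hp₁sa hsq hsum
        p₁ b₁₂ 0 hpmem hb h021
      simpa using hcs
    have split_y : Φ (a₁₂ + p₂) = Φ a₁₂ + Φ p₂ := by
      have hcs := corner_split Φ hΦ h p₂ p₁ hqq hp₁idem hqp hpq hsq hp₁sa hsum'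
        p₂ 0 a₁₂ hqmem h021 ha
      simp only [zero_add] at hcs
      rw [add_comm p₂ a₁₂] at hcs
      rw [hcs]; abel
    have E1 : Φ p₁ * Φ a₁₂ + Φ a₁₂ * star (Φ p₁) = Φ a₁₂ := by
      have h1 := h p₁ a₁₂
      rw [hp₁sa, pa, ap0, add_zero] at h1
      exact h1.symm
    have E2 : Φ p₁ * Φ p₂ + Φ p₂ * star (Φ p₁) = 0 := by
      have h1 := h p₁ p₂
      rw [hp₁sa, hpq, hqp, add_zero] at h1
      rw [← h1, hΦ0]
    have E3 : Φ b₁₂ * Φ a₁₂ + Φ a₁₂ * star (Φ b₁₂) = Φ (a₁₂ * star b₁₂) := by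
      have h1 := h b₁₂ a₁₂
      rw [hba, zero_add] at h1
      exact h1.symm
    have E4 : Φ b₁₂ * Φ p₂ + Φ p₂ * star (Φ b₁₂) = Φ (b₁₂ + star b₁₂) := by
      have h1 := h b₁₂ p₂
      rw [bq, qsb] at h1
      exact h1.symm
    have HXY := h (p₁ + b₁₂) (a₁₂ + p₂)
    have argL : (p₁ + b₁₂) * (a₁₂ + p₂) + (a₁₂ + p₂) * star (p₁ + b₁₂)
        = a₁₂ * star b₁₂ + ((a₁₂ + b₁₂) + star b₁₂) := by
      rw [star_add, hp₁sa]
      rw [show (p₁ + b₁₂) * (a₁₂ + p₂) + (a₁₂ + p₂) * (p₁ + star b₁₂)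
          = p₁ * a₁₂ + p₁ * p₂ + b₁₂ * a₁₂ + b₁₂ * p₂
            + (a₁₂ * p₁ + a₁₂ * star b₁₂ + p₂ * p₁ + p₂ * star b₁₂) from by noncomm_ring]
      rw [pa, hpq, hba, bq, ap0, hqp, qsb]
      abel
    rw [argL, split_x, split_y, star_add] at HXY
    rw [show (Φ p₁ + Φ b₁₂) * (Φ a₁₂ + Φ p₂)
          + (Φ a₁₂ + Φ p₂) * (star (Φ p₁) + star (Φ b₁₂))
        = (Φ p₁ * Φ a₁₂ + Φ a₁₂ * star (Φ p₁)) + (Φ p₁ * Φ p₂ + Φ p₂ * star (Φ p₁))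
          + (Φ b₁₂ * Φ a₁₂ + Φ a₁₂ * star (Φ b₁₂))
          + (Φ b₁₂ * Φ p₂ + Φ p₂ * star (Φ b₁₂)) from by noncomm_ring,
      E1, E2, E3, E4] at HXY
    have L1 := corner_split Φ hΦ h p₁ p₂ hp₁idem hqq hpq hqp hp₁sa hsq hsum
      (a₁₂ * star b₁₂) (a₁₂ + b₁₂) (star b₁₂) he1 hz1 hsb
    have L2ab := pair_split Φ hΦ h p₁ p₂ hp₁idem hqq hpq hqp hp₁sa hsq hsum
      (a₁₂ + b₁₂) (star b₁₂) hz1 hsb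
    have L2b := pair_split Φ hΦ h p₁ p₂ hp₁idem hqq hpq hqp hp₁sa hsq hsum
      b₁₂ (star b₁₂) hb hsb
    rw [L1, L2ab, L2b] at HXY
    have final : Φ (a₁₂ + b₁₂) + (Φ (a₁₂ * star b₁₂) + Φ (star b₁₂))
        = (Φ a₁₂ + Φ b₁₂) + (Φ (a₁₂ * star b₁₂) + Φ (star b₁₂)) := by
      calc Φ (a₁₂ + b₁₂) + (Φ (a₁₂ * star b₁₂) + Φ (star b₁₂))
          = Φ (a₁₂ * star b₁₂) + (Φ (a₁₂ + b₁₂) + Φ (star b₁₂)) := by abel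
        _ = Φ a₁₂ + 0 + Φ (a₁₂ * star b₁₂) + (Φ b₁₂ + Φ (star b₁₂)) := HXY
        _ = (Φ a₁₂ + Φ b₁₂) + (Φ (a₁₂ * star b₁₂) + Φ (star b₁₂)) := by abel
    exact add_right_cancel final
  · -- Part (ii): additivity on A₂₁
    obtain ⟨qc, cp, cq0, pc0⟩ := corner_facts hqq hp₁idem hqp hpq hc
    obtain ⟨qd, dp, dq0, pd0⟩ := corner_facts hqq hp₁idem hqp hpq hd
    have hsd : star d₂₁ = p₁ * star d₂₁ * p₂ := by
      calc star d₂₁ = star (p₂ * d₂₁ * p₁) := congrArg star hd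
        _ = star p₁ * (star d₂₁ * star p₂) := by rw [star_mul, star_mul]
        _ = p₁ * star d₂₁ * p₂ := by rw [hp₁sa, hsq, ← mul_assoc]
    obtain ⟨psd, sdq, sdp0, qsd0⟩ := corner_facts hp₁idem hqq hpq hqp hsd
    have hdc : d₂₁ * c₂₁ = 0 := by
      calc d₂₁ * c₂₁ = d₂₁ * (p₂ * c₂₁ * p₁) := congrArg (fun t => d₂₁ * t) hc
        _ = (d₂₁ * p₂) * (c₂₁ * p₁) := by noncomm_ring
        _ = 0 := by rw [dq0, zero_mul]
    have hz2 : c₂₁ + d₂₁ = p₂ * (c₂₁ + d₂₁) * p₁ := by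
      rw [mul_add, add_mul, ← hc, ← hd]
    have he2 : c₂₁ * star d₂₁ = p₂ * (c₂₁ * star d₂₁) * p₂ := by
      rw [show p₂ * (c₂₁ * star d₂₁) * p₂ = (p₂ * c₂₁) * (star d₂₁ * p₂) from by
        noncomm_ring, qc, sdq]
    have split_x : Φ (p₂ + d₂₁) = Φ p₂ + Φ d₂₁ := by
      have hcs := corner_split Φ hΦ h p₂ p₁ hqq hp₁idem hqp hpq hsq hp₁sa hsum'
        p₂ d₂₁ 0 hqmem hd h012
      simpa using hcs
    have split_y : Φ (c₂₁ + p₁) = Φ c₂₁ + Φ p₁ := by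
      have hcs := corner_split Φ hΦ h p₁ p₂ hp₁idem hqq hpq hqp hp₁sa hsq hsum
        p₁ 0 c₂₁ hpmem h012 hc
      simp only [zero_add] at hcs
      rw [add_comm p₁ c₂₁] at hcs
      rw [hcs]; abel
    have E1 : Φ p₂ * Φ c₂₁ + Φ c₂₁ * star (Φ p₂) = Φ c₂₁ := by
      have h1 := h p₂ c₂₁
      rw [hsq, qc, cq0, add_zero] at h1
      exact h1.symm
    have E2 : Φ p₂ * Φ p₁ + Φ p₁ * star (Φ p₂) = 0 := by
      have h1 := h p₂ p₁
      rw [hsq, hqp, hpq, add_zero] at h1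
      rw [← h1, hΦ0]
    have E3 : Φ d₂₁ * Φ c₂₁ + Φ c₂₁ * star (Φ d₂₁) = Φ (c₂₁ * star d₂₁) := by
      have h1 := h d₂₁ c₂₁
      rw [hdc, zero_add] at h1
      exact h1.symm
    have E4 : Φ d₂₁ * Φ p₁ + Φ p₁ * star (Φ d₂₁) = Φ (d₂₁ + star d₂₁) := by
      have h1 := h d₂₁ p₁
      rw [dp, psd] at h1
      exact h1.symm
    have HXY := h (p₂ + d₂₁) (c₂₁ + p₁)
    have argL : (p₂ + d₂₁) * (c₂₁ + p₁) + (c₂₁ + p₁) * star (p₂ + d₂₁)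
        = c₂₁ * star d₂₁ + ((c₂₁ + d₂₁) + star d₂₁) := by
      rw [star_add, hsq]
      rw [show (p₂ + d₂₁) * (c₂₁ + p₁) + (c₂₁ + p₁) * (p₂ + star d₂₁)
          = p₂ * c₂₁ + p₂ * p₁ + d₂₁ * c₂₁ + d₂₁ * p₁
            + (c₂₁ * p₂ + c₂₁ * star d₂₁ + p₁ * p₂ + p₁ * star d₂₁) from by noncomm_ring]
      rw [qc, hqp, hdc, dp, cq0, hpq, psd]
      abel
    rw [argL, split_x, split_y, star_add] at HXY
    rw [show (Φ p₂ + Φ d₂₁) * (Φ c₂₁ + Φ p₁)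
          + (Φ c₂₁ + Φ p₁) * (star (Φ p₂) + star (Φ d₂₁))
        = (Φ p₂ * Φ c₂₁ + Φ c₂₁ * star (Φ p₂)) + (Φ p₂ * Φ p₁ + Φ p₁ * star (Φ p₂))
          + (Φ d₂₁ * Φ c₂₁ + Φ c₂₁ * star (Φ d₂₁))
          + (Φ d₂₁ * Φ p₁ + Φ p₁ * star (Φ d₂₁)) from by noncomm_ring,
      E1, E2, E3, E4] at HXY
    have L1 := corner_split Φ hΦ h p₂ p₁ hqq hp₁idem hqp hpq hsq hp₁sa hsum'
      (c₂₁ * star d₂₁) (c₂₁ + d₂₁) (star d₂₁) he2 hz2 hsd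
    have L2cd := pair_split Φ hΦ h p₂ p₁ hqq hp₁idem hqp hpq hsq hp₁sa hsum'
      (c₂₁ + d₂₁) (star d₂₁) hz2 hsd
    have L2d := pair_split Φ hΦ h p₂ p₁ hqq hp₁idem hqp hpq hsq hp₁sa hsum'
      d₂₁ (star d₂₁) hd hsd
    rw [L1, L2cd, L2d] at HXY
    have final : Φ (c₂₁ + d₂₁) + (Φ (c₂₁ * star d₂₁) + Φ (star d₂₁))
        = (Φ c₂₁ + Φ d₂₁) + (Φ (c₂₁ * star d₂₁) + Φ (star d₂₁)) := by
      calc Φ (c₂₁ + d₂₁) + (Φ (c₂₁ * star d₂₁) + Φ (star d₂₁))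
          = Φ (c₂₁ * star d₂₁) + (Φ (c₂₁ + d₂₁) + Φ (star d₂₁)) := by abel
        _ = Φ c₂₁ + 0 + Φ (c₂₁ * star d₂₁) + (Φ d₂₁ + Φ (star d₂₁)) := HXY
        _ = (Φ c₂₁ + Φ d₂₁) + (Φ (c₂₁ * star d₂₁) + Φ (star d₂₁)) := by abel
    exact add_right_cancel final
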